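/- Let P be a pure brush polyomino with handle J, |J| = d, and bristles I_1,…,I_d with ℓ_k = |I_k| ≥ 2 for all k, and let t = #{k : ℓ_k ≥ 3}. Then the induced matching number of G_P equals min(t+1, d). Moreover, defining h_s = Σ_{i=0}^{s} (−1)^{s−i} · binom(d−i, s−i) · f_{i−1} where f_{i−1} is the number of i-element sets of pairwise non-attacking cells of P (f_{−1} = 1), one has h_s = 0 for every s with min(t+1, d) < s ≤ d. -/

import Mathlib

/-- A cell of the grid, identified with its lower-left corner. -/
abbrev Cell : Type := ℤ × ℤ

/-- Two cells are adjacent if they differ by `(±1,0)` or `(0,±1)`. -/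
def Adjacent (c d : Cell) : Prop :=
  (c.1 = d.1 ∧ (c.2 = d.2 + 1 ∨ d.2 = c.2 + 1)) ∨
  (c.2 = d.2 ∧ (c.1 = d.1 + 1 ∨ d.1 = c.1 + 1))

/-- A polyomino: a finite nonempty set of cells, any two of which are joined by a
path of adjacent cells inside the set. -/
def IsPolyomino (P : Finset Cell) : Prop :=
  P.Nonempty ∧ ∀ c ∈ P, ∀ d ∈ P,
    Relation.ReflTransGen (fun a b => Adjacent a b ∧ a ∈ P ∧ b ∈ P) c d

/-- A horizontal segment of consecutive cells in a row. -/
def IsHSeg (S : Finset Cell) : Prop :=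
  ∃ y a b : ℤ, a ≤ b ∧ S = (Finset.Icc a b).image (fun x => (x, y))

/-- A vertical segment of consecutive cells in a column. -/
def IsVSeg (S : Finset Cell) : Prop :=
  ∃ x a b : ℤ, a ≤ b ∧ S = (Finset.Icc a b).image (fun y => (x, y))

/-- A maximal horizontal cell interval of `P`. -/
def IsMaxHInterval (P I : Finset Cell) : Prop :=
  IsHSeg I ∧ I ⊆ P ∧ ∀ I', IsHSeg I' → I' ⊆ P → I ⊆ I' → I' = I

/-- A maximal vertical cell interval of `P`. -/
def IsMaxVInterval (P I : Finset Cell) : Prop :=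
  IsVSeg I ∧ I ⊆ P ∧ ∀ I', IsVSeg I' → I' ⊆ P → I ⊆ I' → I' = I

/-- A maximal cell interval of `P`. -/
def IsMaxInterval (P I : Finset Cell) : Prop :=
  IsMaxHInterval P I ∨ IsMaxVInterval P I

/-- Two distinct cells of `P` attack each other if they lie in a common maximal
cell interval of `P`. -/
def Attacks (P : Finset Cell) (c d : Cell) : Prop :=
  c ≠ d ∧ ∃ I, IsMaxInterval P I ∧ c ∈ I ∧ d ∈ I

/-- A set of pairwise non-attacking cells of `P` (a face of the rook complex). -/
def IsRookSet (P F : Finset Cell) : Prop :=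
  F ⊆ P ∧ ∀ c ∈ F, ∀ d ∈ F, ¬ Attacks P c d

/-- A maximal set of pairwise non-attacking cells of `P` (a facet of the rook complex). -/
def IsMaxRookSet (P F : Finset Cell) : Prop :=
  IsRookSet P F ∧ ∀ G, IsRookSet P G → F ⊆ G → G = F

/-- An interval `I` is embedded if some set `F` of pairwise non-attacking cells,
disjoint from `I`, attacks every cell of `I`. -/
def IsEmbedded (P I : Finset Cell) : Prop :=
  ∃ F : Finset Cell, IsRookSet P F ∧ F ∩ I = ∅ ∧ ∀ c ∈ I, ∃ f ∈ F, Attacks P f c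

/-- A partition of `P`: pairwise disjoint maximal cell intervals whose union is `P`. -/
def IsPartition (P : Finset Cell) (A : Finset (Finset Cell)) : Prop :=
  (∀ I ∈ A, IsMaxInterval P I) ∧
  (∀ I ∈ A, ∀ J ∈ A, I ≠ J → Disjoint I J) ∧
  A.biUnion id = P

/-- A super partition: a partition none of whose intervals is embedded. -/
def IsSuperPartition (P : Finset Cell) (A : Finset (Finset Cell)) : Prop :=
  IsPartition P A ∧ ∀ I ∈ A, ¬ IsEmbedded P I

/-- `P` is a square: a translate of the `n × n` block of cells for some `n ≥ 1`. -/
def IsSquareBlock (P : Finset Cell) : Prop :=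
  ∃ a b n : ℤ, 1 ≤ n ∧ P = Finset.Icc a (a + n - 1) ×ˢ Finset.Icc b (b + n - 1)

/-- The graph `G_P` on the cells of `P` whose edges are the attacking pairs. -/
def GP (P : Finset Cell) : SimpleGraph {c : Cell // c ∈ P} where
  Adj c d := Attacks P (c : Cell) (d : Cell)
  symm := by
    constructor
    rintro c d ⟨hne, I, hI, hc, hd⟩
    exact ⟨hne.symm, I, hI, hd, hc⟩
  loopless := by
    constructor
    rintro c ⟨hne, -⟩
    exact hne rfl

/-- The complement graph `Ḡ_P`. -/
def GBar (P : Finset Cell) : SimpleGraph {c : Cell // c ∈ P} := (GP P)ᶜ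

/-- `G` has an induced cycle of length `n`: an injective map from `ZMod n`
whose image induces exactly the cycle adjacencies. -/
def HasInducedCycle {V : Type*} (G : SimpleGraph V) (n : ℕ) : Prop :=
  3 ≤ n ∧ ∃ f : ZMod n → V, Function.Injective f ∧
    ∀ i j : ZMod n, G.Adj (f i) (f j) ↔ (i = j + 1 ∨ j = i + 1)

/-- A graph is chordal if it has no induced cycle of length at least 4. -/
def IsChordal {V : Type*} (G : SimpleGraph V) : Prop :=
  ∀ n, 4 ≤ n → ¬ HasInducedCycle G n

/-- `P` is simple: any two cells outside `P` are joined by a path of adjacent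
cells outside `P`. -/
def IsSimple (P : Finset Cell) : Prop :=
  ∀ c d : Cell, c ∉ P → d ∉ P →
    Relation.ReflTransGen (fun a b => Adjacent a b ∧ a ∉ P ∧ b ∉ P) c d

/-- `P` is thin: it contains no four cells forming a `2 × 2` square. -/
def IsThin (P : Finset Cell) : Prop :=
  ¬ ∃ a : Cell, ({a, (a.1 + 1, a.2), (a.1, a.2 + 1), (a.1 + 1, a.2 + 1)} : Finset Cell) ⊆ P

/-- A path of distinct cells of `P`, consecutive cells being adjacent. -/
def IsCellPath (P : Finset Cell) (l : List Cell) : Prop :=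
  l.Nodup ∧ (∀ c ∈ l, c ∈ P) ∧ l.Chain' Adjacent

/-- The number of changes of direction of a path of cells: positions `k`
(with `1 ≤ k ≤ length - 2`) where the `(k-1)`-st and `(k+1)`-st cells differ
in both coordinates. -/
def dirChanges (l : List Cell) : ℕ :=
  ((Finset.Ico 1 (l.length - 1)).filter (fun k =>
    (l.getD (k - 1) (0, 0)).1 ≠ (l.getD (k + 1) (0, 0)).1 ∧
    (l.getD (k - 1) (0, 0)).2 ≠ (l.getD (k + 1) (0, 0)).2)).card

/-- The eight rotations/reflections of the grid. -/
def dihedralMaps : List (Cell → Cell) :=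
  [fun p => (p.1, p.2), fun p => (-p.2, p.1), fun p => (-p.1, -p.2), fun p => (p.2, -p.1),
   fun p => (p.2, p.1), fun p => (-p.1, p.2), fun p => (-p.2, -p.1), fun p => (p.1, -p.2)]

/-- `P` is obtained from `Q` by a translation, rotation or reflection of `ℤ²`. -/
def CongruentTo (P Q : Finset Cell) : Prop :=
  ∃ g ∈ dihedralMaps, ∃ t : Cell, P = Q.image (fun p => g p + t)

/-- A brush polyomino with handle `J`. -/
def IsBrush (P J : Finset Cell) : Prop :=
  IsPolyomino P ∧ IsSimple P ∧ IsThin P ∧ IsMaxInterval P J ∧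
  (∀ I, IsMaxInterval P I → 2 ≤ I.card → I ≠ J → (I ∩ J).Nonempty) ∧
  (∀ c ∈ P, c ∈ J ∨ ∃ I, IsMaxInterval P I ∧ 2 ≤ I.card ∧ c ∈ I)

/-- A short brush polyomino: a brush all of whose bristles have at most two cells. -/
def IsShortBrush (P : Finset Cell) : Prop :=
  ∃ J, IsBrush P J ∧ ∀ I, IsMaxInterval P I → I ≠ J → I.card ≤ 2

/-- A pure brush polyomino: handle `J` of cardinality `d` together with `d`
pairwise disjoint bristles `I 0, …, I (d-1)` perpendicular to `J`, each meeting
`J`, whose union is `P`. -/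
def IsPureBrush (P J : Finset Cell) (d : ℕ) (I : Fin d → Finset Cell) : Prop :=
  IsPolyomino P ∧ IsSimple P ∧ IsThin P ∧
  J.card = d ∧
  ((IsMaxHInterval P J ∧ ∀ k, IsMaxVInterval P (I k)) ∨
   (IsMaxVInterval P J ∧ ∀ k, IsMaxHInterval P (I k))) ∧
  (∀ j k, j ≠ k → Disjoint (I j) (I k)) ∧
  (∀ k, ((I k) ∩ J).Nonempty) ∧
  Finset.univ.biUnion I = P

/-- The `k`-th elementary symmetric polynomial of `x 0, …, x (d-1)`. -/
def esymm {R : Type*} [CommRing R] {d : ℕ} (k : ℕ) (x : Fin d → R) : R :=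
  ∑ s ∈ Finset.powersetCard k (Finset.univ : Finset (Fin d)), ∏ i ∈ s, x i

/-- `G_P` has an induced matching with `n` edges `{A i, B i}`. -/
def HasInducedMatching (P : Finset Cell) (n : ℕ) : Prop :=
  ∃ A B : Fin n → Cell,
    (∀ i, Attacks P (A i) (B i)) ∧
    (∀ i j, i ≠ j → A i ≠ A j) ∧
    (∀ i j, i ≠ j → B i ≠ B j) ∧
    (∀ i j, A i ≠ B j) ∧
    (∀ i j, i ≠ j →
      ¬ Attacks P (A i) (A j) ∧ ¬ Attacks P (A i) (B j) ∧ ¬ Attacks P (B i) (B j))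

/-- The induced matching number `ν(G_P)`. -/
noncomputable def matchNum (P : Finset Cell) : ℕ := sSup {n | HasInducedMatching P n}

/-- `c` is a single cell of the maximal interval `I`: the maximal interval of `P`
through `c` perpendicular to `I` is `{c}`. -/
def IsSingleCell (P I : Finset Cell) (c : Cell) : Prop :=
  c ∈ I ∧
  ((IsMaxHInterval P I ∧ ∀ I', IsMaxVInterval P I' → c ∈ I' → I' = {c}) ∨
   (IsMaxVInterval P I ∧ ∀ I', IsMaxHInterval P I' → c ∈ I' → I' = {c}))

namespace Brush

open Finset

/-- coordinate swap -/
def sw (p : Cell) : Cell := (p.2, p.1)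

@[simp] lemma sw_sw (p : Cell) : sw (sw p) = p := rfl

lemma sw_inj : Function.Injective sw := by
  intro a b h
  have := congrArg sw h
  simpa using this

@[simp] lemma mem_image_sw {S : Finset Cell} {c : Cell} : c ∈ S.image sw ↔ sw c ∈ S := by
  constructor
  · rintro h
    rcases Finset.mem_image.1 h with ⟨a, ha, rfl⟩
    simpa [sw] using ha
  · intro h
    refine Finset.mem_image.2 ⟨sw c, h, ?_⟩
    simp

@[simp] lemma image_sw_image_sw (S : Finset Cell) : (S.image sw).image sw = S := by
  rw [Finset.image_image]
  have : sw ∘ sw = id := funext fun p => sw_sw p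
  rw [this, Finset.image_id]

lemma hseg_sw {S : Finset Cell} (h : IsVSeg S) : IsHSeg (S.image sw) := by
  obtain ⟨x, a, b, hab, rfl⟩ := h
  exact ⟨x, a, b, hab, by rw [Finset.image_image]; rfl⟩

lemma vseg_sw {S : Finset Cell} (h : IsHSeg S) : IsVSeg (S.image sw) := by
  obtain ⟨y, a, b, hab, rfl⟩ := h
  exact ⟨y, a, b, hab, by rw [Finset.image_image]; rfl⟩

lemma image_sw_subset {S P : Finset Cell} (h : S ⊆ P) : S.image sw ⊆ P.image sw :=
  Finset.image_subset_image h

lemma maxV_sw {P S : Finset Cell} (h : IsMaxHInterval P S) :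
    IsMaxVInterval (P.image sw) (S.image sw) := by
  refine ⟨vseg_sw h.1, image_sw_subset h.2.1, ?_⟩
  intro I' hseg hsub hsup
  have h1 : IsHSeg (I'.image sw) := hseg_sw hseg
  have h2 : I'.image sw ⊆ P := by
    intro c hc
    have := hsub (mem_image_sw.1 hc)
    simpa using mem_image_sw.1 this
  have h3 : S ⊆ I'.image sw := by
    intro c hc
    exact mem_image_sw.2 (hsup (by simpa using mem_image_sw.2 (by simpa [sw] using hc)))
  have := h.2.2 _ h1 h2 h3
  calc I' = (I'.image sw).image sw := (image_sw_image_sw I').symm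
    _ = S.image sw := by rw [this]

lemma maxH_sw {P S : Finset Cell} (h : IsMaxVInterval P S) :
    IsMaxHInterval (P.image sw) (S.image sw) := by
  refine ⟨hseg_sw h.1, image_sw_subset h.2.1, ?_⟩
  intro I' hseg hsub hsup
  have h1 : IsVSeg (I'.image sw) := vseg_sw hseg
  have h2 : I'.image sw ⊆ P := by
    intro c hc
    have := hsub (mem_image_sw.1 hc)
    simpa using mem_image_sw.1 this
  have h3 : S ⊆ I'.image sw := by
    intro c hc
    exact mem_image_sw.2 (hsup (by simpa using mem_image_sw.2 (by simpa [sw] using hc)))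
  have := h.2.2 _ h1 h2 h3
  calc I' = (I'.image sw).image sw := (image_sw_image_sw I').symm
    _ = S.image sw := by rw [this]

lemma maxInterval_sw {P S : Finset Cell} (h : IsMaxInterval P S) :
    IsMaxInterval (P.image sw) (S.image sw) := by
  rcases h with h | h
  · exact Or.inr (maxV_sw h)
  · exact Or.inl (maxH_sw h)

lemma attacks_sw {P : Finset Cell} {c d : Cell} (h : Attacks P c d) :
    Attacks (P.image sw) (sw c) (sw d) := by
  obtain ⟨hne, I', hI', hc, hd⟩ := h
  refine ⟨fun hcd => hne (sw_inj hcd), I'.image sw, maxInterval_sw hI', ?_, ?_⟩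
  · exact mem_image_sw.2 (by rw [sw_sw]; exact hc)
  · exact mem_image_sw.2 (by rw [sw_sw]; exact hd)

lemma attacks_sw_iff {P : Finset Cell} {c d : Cell} :
    Attacks (P.image sw) (sw c) (sw d) ↔ Attacks P c d := by
  constructor
  · intro h
    have := attacks_sw h
    simpa using this
  · exact attacks_sw

lemma thin_sw {P : Finset Cell} (h : IsThin P) : IsThin (P.image sw) := by
  rintro ⟨a, ha⟩
  refine h ⟨sw a, ?_⟩
  intro c hc
  simp only [Finset.mem_insert, Finset.mem_singleton] at hc
  have key : ∀ b : Cell, b ∈ ({a, (a.1 + 1, a.2), (a.1, a.2 + 1), (a.1 + 1, a.2 + 1)} : Finset Cell) → sw b ∈ P := by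
    intro b hb
    have := ha hb
    simpa using mem_image_sw.1 (by simpa using this)
  rcases hc with rfl | rfl | rfl | rfl
  · exact key a (by simp)
  · have := key (a.1, a.2 + 1) (by simp)
    simpa [sw] using this
  · have := key (a.1 + 1, a.2) (by simp)
    simpa [sw] using this
  · have := key (a.1 + 1, a.2 + 1) (by simp)
    simpa [sw] using this

end Brush
namespace Brush

open Finset

lemma mem_hseg {S : Finset Cell} {y a b : ℤ} (hS : S = (Finset.Icc a b).image (fun x => (x, y)))
    {c : Cell} : c ∈ S ↔ c.2 = y ∧ a ≤ c.1 ∧ c.1 ≤ b := by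
  subst hS
  constructor
  · intro h
    rcases Finset.mem_image.1 h with ⟨x, hx, rfl⟩
    simp only [Finset.mem_Icc] at hx
    exact ⟨rfl, hx.1, hx.2⟩
  · rintro ⟨h1, h2, h3⟩
    refine Finset.mem_image.2 ⟨c.1, Finset.mem_Icc.2 ⟨h2, h3⟩, ?_⟩
    rw [← h1]

lemma mem_vseg {S : Finset Cell} {x a b : ℤ} (hS : S = (Finset.Icc a b).image (fun y => (x, y)))
    {c : Cell} : c ∈ S ↔ c.1 = x ∧ a ≤ c.2 ∧ c.2 ≤ b := by
  subst hS
  constructor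
  · intro h
    rcases Finset.mem_image.1 h with ⟨y, hy, rfl⟩
    simp only [Finset.mem_Icc] at hy
    exact ⟨rfl, hy.1, hy.2⟩
  · rintro ⟨h1, h2, h3⟩
    refine Finset.mem_image.2 ⟨c.2, Finset.mem_Icc.2 ⟨h2, h3⟩, ?_⟩
    rw [← h1]

/-- Two maximal vertical intervals sharing a cell are equal. -/
lemma maxV_unique {P A B : Finset Cell} (hA : IsMaxVInterval P A) (hB : IsMaxVInterval P B)
    (hne : (A ∩ B).Nonempty) : A = B := by
  obtain ⟨x, a, b, hab, hAeq⟩ := hA.1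
  obtain ⟨x', a', b', hab', hBeq⟩ := hB.1
  obtain ⟨c, hc⟩ := hne
  have hcA := (mem_vseg hAeq).1 (Finset.mem_inter.1 hc).1
  have hcB := (mem_vseg hBeq).1 (Finset.mem_inter.1 hc).2
  have hxx : x = x' := hcA.1 ▸ hcB.1 ▸ rfl
  set C : Finset Cell := (Finset.Icc (min a a') (max b b')).image (fun y => (x, y)) with hC
  have hCseg : IsVSeg C := ⟨x, min a a', max b b', by
    have := hcA.2.1; have := hcA.2.2; omega, rfl⟩
  have hmemC : ∀ c' : Cell, c' ∈ C ↔ c'.1 = x ∧ min a a' ≤ c'.2 ∧ c'.2 ≤ max b b' :=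
    fun c' => mem_vseg hC
  have hAC : A ⊆ C := by
    intro u hu
    have := (mem_vseg hAeq).1 hu
    exact (hmemC u).2 ⟨this.1, by omega⟩
  have hBC : B ⊆ C := by
    intro u hu
    obtain ⟨hu1, hu2, hu3⟩ := (mem_vseg hBeq).1 hu
    exact (hmemC u).2 ⟨by rw [hu1, ← hxx], by omega, by omega⟩
  have hCP : C ⊆ P := by
    intro u hu
    have hu' := (hmemC u).1 hu
    by_cases h2 : u.2 ≤ b ∧ a ≤ u.2
    · exact hA.2.1 ((mem_vseg hAeq).2 ⟨hu'.1, h2.2, h2.1⟩)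
    · have : a' ≤ u.2 ∧ u.2 ≤ b' := by
        have := hcA.2.1; have := hcA.2.2; have := hcB.2.1; have := hcB.2.2
        have := hu'.2.1; have := hu'.2.2
        omega
      exact hB.2.1 ((mem_vseg hBeq).2 ⟨hu'.1.trans hxx, this.1, this.2⟩)
  have e1 := hA.2.2 C hCseg hCP hAC
  have e2 := hB.2.2 C hCseg hCP hBC
  rw [← e1, ← e2]

/-- Two maximal horizontal intervals sharing a cell are equal. -/
lemma maxH_unique {P A B : Finset Cell} (hA : IsMaxHInterval P A) (hB : IsMaxHInterval P B)
    (hne : (A ∩ B).Nonempty) : A = B := by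
  have h1 := maxV_sw hA
  have h2 := maxV_sw hB
  have : ((A.image sw) ∩ (B.image sw)).Nonempty := by
    obtain ⟨c, hc⟩ := hne
    exact ⟨sw c, Finset.mem_inter.2 ⟨mem_image_sw.2 (by rw [sw_sw]; exact (Finset.mem_inter.1 hc).1),
      mem_image_sw.2 (by rw [sw_sw]; exact (Finset.mem_inter.1 hc).2)⟩⟩
  have := maxV_unique h1 h2 this
  calc A = (A.image sw).image sw := (image_sw_image_sw A).symm
    _ = (B.image sw).image sw := by rw [this]
    _ = B := image_sw_image_sw B

section Core

variable {P J : Finset Cell} {d : ℕ} {I : Fin d → Finset Cell}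

/-- Geometric core, horizontal-handle orientation. -/
lemma attacks_iff_H (hthin : IsThin P) (hJ : IsMaxHInterval P J)
    (hI : ∀ k, IsMaxVInterval P (I k)) (hmeet : ∀ k, ((I k) ∩ J).Nonempty)
    (hunion : Finset.univ.biUnion I = P) {c e : Cell} :
    Attacks P c e ↔ c ≠ e ∧ ((c ∈ J ∧ e ∈ J) ∨ ∃ k, c ∈ I k ∧ e ∈ I k) := by
  obtain ⟨y0, ja, jb, hj, hJeq⟩ := hJ.1
  -- columns of bristles
  have hIseg : ∀ k, ∃ x a b : ℤ, a ≤ b ∧ I k = (Finset.Icc a b).image (fun y => (x, y)) :=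
    fun k => (hI k).1
  choose X A B hABle hIeq using hIseg
  -- each cell of P lies in some bristle
  have hmemP : ∀ c' : Cell, c' ∈ P → ∃ k, c' ∈ I k := by
    intro c' hc'
    rw [← hunion] at hc'
    rcases Finset.mem_biUnion.1 hc' with ⟨k, _, hk⟩
    exact ⟨k, hk⟩
  -- the handle cell of bristle k is (X k, y0)
  have hhandle : ∀ k, A k ≤ y0 ∧ y0 ≤ B k ∧ ja ≤ X k ∧ X k ≤ jb := by
    intro k
    obtain ⟨c', hc'⟩ := hmeet k
    have h1 := (mem_vseg (hIeq k)).1 (Finset.mem_inter.1 hc').1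
    have h2 := (mem_hseg hJeq).1 (Finset.mem_inter.1 hc').2
    refine ⟨?_, ?_, ?_, ?_⟩ <;> omega
  -- every cell of P on row y0 lies in J
  have hrow : ∀ c' : Cell, c' ∈ P → c'.2 = y0 → c' ∈ J := by
    intro c' hc' hy
    obtain ⟨k, hk⟩ := hmemP c' hc'
    have h1 := (mem_vseg (hIeq k)).1 hk
    have h2 := hhandle k
    exact (mem_hseg hJeq).2 ⟨hy, by omega, by omega⟩
  -- no horizontal adjacency off row y0
  have hadj : ∀ x y : ℤ, ((x, y) : Cell) ∈ P → ((x + 1, y) : Cell) ∈ P → y ≠ y0 → False := by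
    intro x y h1 h2 hy
    obtain ⟨k, hk⟩ := hmemP _ h1
    obtain ⟨k', hk'⟩ := hmemP _ h2
    have m1 := (mem_vseg (hIeq k)).1 hk
    have m2 := (mem_vseg (hIeq k')).1 hk'
    have hh1 := hhandle k
    have hh2 := hhandle k'
    simp only at m1 m2
    -- both columns contain rows from min to max of y, y0
    have col1 : ∀ z : ℤ, (y ≤ z ∧ z ≤ y0) ∨ (y0 ≤ z ∧ z ≤ y) → ((x, z) : Cell) ∈ P := by
      intro z hz
      exact (hI k).2.1 ((mem_vseg (hIeq k)).2 ⟨m1.1, by omega, by omega⟩)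
    have col2 : ∀ z : ℤ, (y ≤ z ∧ z ≤ y0) ∨ (y0 ≤ z ∧ z ≤ y) → ((x + 1, z) : Cell) ∈ P := by
      intro z hz
      exact (hI k').2.1 ((mem_vseg (hIeq k')).2 ⟨m2.1, by omega, by omega⟩)
    rcases lt_or_gt_of_ne hy with hlt | hgt
    · -- y < y0 : square at (x, y0 - 1)
      refine hthin ⟨((x, y0 - 1) : Cell), ?_⟩
      intro u hu
      simp only [Finset.mem_insert, Finset.mem_singleton] at hu
      rcases hu with rfl | rfl | rfl | rfl
      · exact col1 (y0 - 1) (by omega)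
      · exact col2 (y0 - 1) (by omega)
      · have hyy : y0 - 1 + 1 = y0 := by omega
        rw [hyy]
        exact col1 y0 (by omega)
      · have hyy : y0 - 1 + 1 = y0 := by omega
        rw [hyy]
        exact col2 y0 (by omega)
    · -- y > y0 : square at (x, y0)
      refine hthin ⟨((x, y0) : Cell), ?_⟩
      intro u hu
      simp only [Finset.mem_insert, Finset.mem_singleton] at hu
      rcases hu with rfl | rfl | rfl | rfl
      · exact col1 y0 (by omega)
      · exact col2 y0 (by omega)
      · exact col1 (y0 + 1) (by omega)
      · exact col2 (y0 + 1) (by omega)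
  constructor
  · rintro ⟨hne, I', hmax, hc, he⟩
    refine ⟨hne, ?_⟩
    rcases hmax with hmax | hmax
    · -- horizontal interval
      obtain ⟨y, a, b, hab, hIeq'⟩ := hmax.1
      have mc := (mem_hseg hIeq').1 hc
      have me := (mem_hseg hIeq').1 he
      by_cases hy : y = y0
      · subst hy
        exact Or.inl ⟨hrow c (hmax.2.1 hc) mc.1, hrow e (hmax.2.1 he) me.1⟩
      · exfalso
        have hcx : c.1 ≠ e.1 := by
          intro hx
          exact hne (Prod.ext hx (mc.1.trans me.1.symm))
        have hb : a < b := by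
          rcases lt_or_ge a b with h | h
          · exact h
          · exfalso
            have := mc.2.1; have := mc.2.2; have := me.2.1; have := me.2.2
            omega
        have p1 : ((a, y) : Cell) ∈ P := hmax.2.1 ((mem_hseg hIeq').2 ⟨rfl, le_refl a, le_of_lt hb⟩)
        have p2 : ((a + 1, y) : Cell) ∈ P := hmax.2.1 ((mem_hseg hIeq').2 ⟨rfl, by omega, by omega⟩)
        exact hadj a y p1 p2 hy
    · -- vertical interval: equals some bristle
      have hcP : c ∈ P := hmax.2.1 hc
      obtain ⟨k, hk⟩ := hmemP c hcP
      have : I' = I k := maxV_unique hmax (hI k) ⟨c, Finset.mem_inter.2 ⟨hc, hk⟩⟩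
      exact Or.inr ⟨k, this ▸ hc, this ▸ he⟩
  · rintro ⟨hne, hJJ | ⟨k, hk1, hk2⟩⟩
    · exact ⟨hne, J, Or.inl hJ, hJJ.1, hJJ.2⟩
    · exact ⟨hne, I k, Or.inr (hI k), hk1, hk2⟩

end Core

end Brush
namespace Brush

open Finset

section Transfer

variable {P J : Finset Cell} {d : ℕ} {I : Fin d → Finset Cell}

/-- Attack characterization for a pure brush (both orientations). -/
lemma attacks_iff (h : IsPureBrush P J d I) {c e : Cell} :
    Attacks P c e ↔ c ≠ e ∧ ((c ∈ J ∧ e ∈ J) ∨ ∃ k, c ∈ I k ∧ e ∈ I k) := by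
  obtain ⟨-, -, hthin, -, horient, hdisj, hmeet, hunion⟩ := h
  rcases horient with ⟨hJ, hI⟩ | ⟨hJ, hI⟩
  · exact attacks_iff_H hthin hJ hI hmeet hunion
  · -- swap coordinates
    have hthin' : IsThin (P.image sw) := thin_sw hthin
    have hJ' : IsMaxHInterval (P.image sw) (J.image sw) := maxH_sw hJ
    have hI' : ∀ k, IsMaxVInterval (P.image sw) ((I k).image sw) := fun k => maxV_sw (hI k)
    have hmeet' : ∀ k, (((I k).image sw) ∩ (J.image sw)).Nonempty := by
      intro k
      obtain ⟨c', hc'⟩ := hmeet k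
      refine ⟨sw c', Finset.mem_inter.2 ⟨?_, ?_⟩⟩
      · exact mem_image_sw.2 (by rw [sw_sw]; exact (Finset.mem_inter.1 hc').1)
      · exact mem_image_sw.2 (by rw [sw_sw]; exact (Finset.mem_inter.1 hc').2)
    have hunion' : Finset.univ.biUnion (fun k => (I k).image sw) = P.image sw := by
      ext c
      rw [mem_image_sw, ← hunion]
      simp only [Finset.mem_biUnion, Finset.mem_univ, true_and, mem_image_sw]
    have key := attacks_iff_H hthin' hJ' hI' hmeet' hunion' (c := sw c) (e := sw e)
    rw [attacks_sw_iff] at key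
    rw [key]
    constructor
    · rintro ⟨hne, hor⟩
      refine ⟨fun hh => hne (by rw [hh]), ?_⟩
      rcases hor with ⟨h1, h2⟩ | ⟨k, h1, h2⟩
      · exact Or.inl ⟨by have := mem_image_sw.1 h1; rwa [sw_sw] at this,
          by have := mem_image_sw.1 h2; rwa [sw_sw] at this⟩
      · exact Or.inr ⟨k, by have := mem_image_sw.1 h1; rwa [sw_sw] at this,
          by have := mem_image_sw.1 h2; rwa [sw_sw] at this⟩
    · rintro ⟨hne, hor⟩
      refine ⟨fun hh => hne (sw_inj hh), ?_⟩
      rcases hor with ⟨h1, h2⟩ | ⟨k, h1, h2⟩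
      · exact Or.inl ⟨mem_image_sw.2 (by rw [sw_sw]; exact h1),
          mem_image_sw.2 (by rw [sw_sw]; exact h2)⟩
      · exact Or.inr ⟨k, mem_image_sw.2 (by rw [sw_sw]; exact h1),
          mem_image_sw.2 (by rw [sw_sw]; exact h2)⟩

/-- Each bristle meets the handle in at most one cell. -/
lemma interJ_card_le (h : IsPureBrush P J d I) (k : Fin d) : ((I k) ∩ J).card ≤ 1 := by
  obtain ⟨-, -, -, -, horient, -, -, -⟩ := h
  have key : ∀ A B : Finset Cell, IsVSeg A → IsHSeg B → (A ∩ B).card ≤ 1 := by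
    intro A B hA hB
    obtain ⟨x, a, b, -, hAeq⟩ := hA
    obtain ⟨y, a', b', -, hBeq⟩ := hB
    refine Finset.card_le_one.2 ?_
    intro u hu v hv
    have hu1 := (mem_vseg hAeq).1 (Finset.mem_inter.1 hu).1
    have hu2 := (mem_hseg hBeq).1 (Finset.mem_inter.1 hu).2
    have hv1 := (mem_vseg hAeq).1 (Finset.mem_inter.1 hv).1
    have hv2 := (mem_hseg hBeq).1 (Finset.mem_inter.1 hv).2
    exact Prod.ext (hu1.1.trans hv1.1.symm) (hu2.1.trans hv2.1.symm)
  rcases horient with ⟨hJ, hI⟩ | ⟨hJ, hI⟩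
  · exact key _ _ (hI k).1 hJ.1
  · have := key J (I k) hJ.1 (hI k).1
    rwa [Finset.inter_comm] at this
lemma bristle_subset (h : IsPureBrush P J d I) (k : Fin d) : I k ⊆ P := by
  obtain ⟨-, -, -, -, -, -, -, hunion⟩ := h
  rw [← hunion]
  intro c hc
  exact Finset.mem_biUnion.2 ⟨k, Finset.mem_univ k, hc⟩

lemma mem_bristle (h : IsPureBrush P J d I) {c : Cell} (hc : c ∈ P) : ∃ k, c ∈ I k := by
  obtain ⟨-, -, -, -, -, -, -, hunion⟩ := h
  rw [← hunion] at hc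
  rcases Finset.mem_biUnion.1 hc with ⟨k, -, hk⟩
  exact ⟨k, hk⟩

lemma bristle_eq (h : IsPureBrush P J d I) {c : Cell} {j k : Fin d}
    (hj : c ∈ I j) (hk : c ∈ I k) : j = k := by
  obtain ⟨-, -, -, -, -, hdisj, -, -⟩ := h
  by_contra hne
  exact Finset.disjoint_left.1 (hdisj j k hne) hj hk

end Transfer

end Brush
namespace Brush

open Finset

section Rook

variable {P J : Finset Cell} {d : ℕ} {I : Fin d → Finset Cell}

lemma attacks_symm {c e : Cell} (hce : Attacks P c e) : Attacks P e c := by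
  obtain ⟨hne, I', h1, h2, h3⟩ := hce
  exact ⟨hne.symm, I', h1, h3, h2⟩

lemma rook_inter_card (h : IsPureBrush P J d I) {F : Finset Cell} (hF : IsRookSet P F)
    (k : Fin d) : (F ∩ I k).card ≤ 1 := by
  refine Finset.card_le_one.2 ?_
  intro u hu v hv
  by_contra hne
  have hu' := Finset.mem_inter.1 hu
  have hv' := Finset.mem_inter.1 hv
  exact hF.2 u hu'.1 v hv'.1 ((attacks_iff h).2 ⟨hne, Or.inr ⟨k, hu'.2, hv'.2⟩⟩)

/-- the set of bristles met by `F` -/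
def supp {d : ℕ} (I : Fin d → Finset Cell) (F : Finset Cell) : Finset (Fin d) :=
  Finset.univ.filter (fun k => (F ∩ I k).Nonempty)

lemma supp_mono {F G : Finset Cell} (hFG : F ⊆ G) : supp I F ⊆ supp I G := by
  intro k hk
  simp only [supp, Finset.mem_filter, Finset.mem_univ, true_and] at hk ⊢
  obtain ⟨c, hc⟩ := hk
  exact ⟨c, Finset.mem_inter.2 ⟨hFG (Finset.mem_inter.1 hc).1, (Finset.mem_inter.1 hc).2⟩⟩

lemma rook_card_eq (h : IsPureBrush P J d I) {F : Finset Cell} (hF : IsRookSet P F) :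
    F.card = (supp I F).card := by
  classical
  have hFdecomp : F = Finset.univ.biUnion (fun k => F ∩ I k) := by
    ext c
    simp only [Finset.mem_biUnion, Finset.mem_univ, true_and, Finset.mem_inter]
    constructor
    · intro hc
      obtain ⟨k, hk⟩ := mem_bristle h (hF.1 hc)
      exact ⟨k, hc, hk⟩
    · rintro ⟨k, hk, -⟩
      exact hk
  have hdisj2 : ∀ j ∈ (Finset.univ : Finset (Fin d)), ∀ k ∈ Finset.univ, j ≠ k →
      Disjoint (F ∩ I j) (F ∩ I k) := by
    intro j _ k _ hjk
    exact (h.2.2.2.2.2.1 j k hjk).mono (Finset.inter_subset_right) (Finset.inter_subset_right)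
  calc F.card = ∑ k : Fin d, (F ∩ I k).card := by
        conv_lhs => rw [hFdecomp]
        rw [Finset.card_biUnion hdisj2]
    _ = ∑ k : Fin d, if (F ∩ I k).Nonempty then 1 else 0 := by
        refine Finset.sum_congr rfl fun k _ => ?_
        have h1 := rook_inter_card h hF k
        rcases Nat.lt_or_ge (F ∩ I k).card 1 with h2 | h2
        · have : (F ∩ I k).card = 0 := by omega
          rw [this, if_neg]
          simp [Finset.not_nonempty_iff_eq_empty, ← Finset.card_eq_zero, this]
        · have : (F ∩ I k).card = 1 := by omega
          rw [this, if_pos (Finset.card_pos.1 (by omega))]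
    _ = (supp I F).card := by rw [supp, Finset.card_filter]

lemma rook_subset {F G : Finset Cell} (hF : IsRookSet P F) (hGF : G ⊆ F) : IsRookSet P G :=
  ⟨hGF.trans hF.1, fun c hc e he => hF.2 c (hGF hc) e (hGF he)⟩

/-- number of `s`-subsets of `Fin d` containing a given set -/
lemma count_supersets {d s : ℕ} (S : Finset (Fin d)) (hS : S.card ≤ s) :
    (((Finset.univ : Finset (Fin d)).powersetCard s).filter (fun T => S ⊆ T)).card
      = (d - S.card).choose (s - S.card) := by
  classical
  have key : (((Finset.univ : Finset (Fin d)).powersetCard s).filter (fun T => S ⊆ T)).card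
      = (Sᶜ.powersetCard (s - S.card)).card := by
    refine Finset.card_nbij' (fun T => T \ S) (fun T' => T' ∪ S) ?_ ?_ ?_ ?_
    · intro T hT
      simp only [Finset.mem_coe, Finset.mem_filter, Finset.mem_powersetCard] at hT
      obtain ⟨⟨-, hcard⟩, hsub⟩ := hT
      refine Finset.mem_powersetCard.2 ⟨?_, ?_⟩
      · intro x hx
        simp only [Finset.mem_sdiff] at hx
        simpa using hx.2
      · rw [Finset.card_sdiff_of_subset hsub, hcard]
    · intro T' hT'
      simp only [Finset.mem_coe, Finset.mem_powersetCard] at hT'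
      obtain ⟨hsub, hcard⟩ := hT'
      have hdisjTS : Disjoint T' S := by
        refine Finset.disjoint_left.2 ?_
        intro x hx hxS
        have := hsub hx
        simp only [Finset.mem_compl] at this
        exact this hxS
      refine Finset.mem_filter.2 ⟨Finset.mem_powersetCard.2 ⟨Finset.subset_univ _, ?_⟩,
        Finset.subset_union_right⟩
      rw [Finset.card_union_of_disjoint hdisjTS, hcard]
      omega
    · intro T hT
      simp only [Finset.mem_coe, Finset.mem_filter] at hT
      exact Finset.sdiff_union_of_subset hT.2
    · intro T' hT'
      simp only [Finset.mem_coe, Finset.mem_powersetCard] at hT'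
      have hdisjTS : Disjoint T' S := by
        refine Finset.disjoint_left.2 ?_
        intro x hx hxS
        have := hT'.1 hx
        simp only [Finset.mem_compl] at this
        exact this hxS
      show (T' ∪ S) \ S = T'
      rw [Finset.union_sdiff_right, Finset.sdiff_eq_self_of_disjoint hdisjTS]
  rw [key, Finset.card_powersetCard, Finset.card_compl]
  simp

end Rook

end Brush
namespace Brush

open Finset

section HVec

variable {P J : Finset Cell} {d : ℕ} {I : Fin d → Finset Cell}

/-- For a 2-cell bristle, description of the two cells. -/
lemma pair_cells {r : Fin d} (hr : (I r).card = 2) {c : Cell} (hc : c ∈ I r) :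
    ∃ u, u ∈ I r ∧ u ≠ c ∧ ∀ y ∈ I r, y = c ∨ y = u := by
  obtain ⟨a, b, hab, habeq⟩ := Finset.card_eq_two.1 hr
  rw [habeq] at hc
  simp only [Finset.mem_insert, Finset.mem_singleton] at hc
  rcases hc with rfl | rfl
  · exact ⟨b, by simp [habeq], fun hb => hab hb.symm, by
      intro y hy
      simp only [habeq, Finset.mem_insert, Finset.mem_singleton] at hy
      tauto⟩
  · exact ⟨a, by simp [habeq], fun ha => hab ha, by
      intro y hy
      simp only [habeq, Finset.mem_insert, Finset.mem_singleton] at hy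
      tauto⟩

lemma inner_zero (h : IsPureBrush P J d I) (hl : ∀ k, 2 ≤ (I k).card)
    {t s : ℕ} (ht : t = (Finset.univ.filter (fun k => 3 ≤ (I k).card)).card)
    (hts : t + 1 < s)
    (T : Finset (Fin d)) (hTcard : T.card = s)
    (D : Finset (Finset Cell))
    (hD : ∀ F, F ∈ D ↔ (IsRookSet P F ∧ F.card ≤ s ∧ supp I F ⊆ T)) :
    (∑ F ∈ D, (-1 : ℤ) ^ (s - F.card)) = 0 := by
  classical
  -- find two bristles of length 2 inside T
  have hsplit := Finset.card_filter_add_card_filter_not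
    (s := T) (p := fun k => 3 ≤ (I k).card)
  have hle : (T.filter (fun k => 3 ≤ (I k).card)).card ≤ t := by
    rw [ht]
    exact Finset.card_le_card (Finset.filter_subset_filter _ (Finset.subset_univ T))
  have h2 : 2 ≤ (T.filter (fun k => ¬ 3 ≤ (I k).card)).card := by omega
  obtain ⟨p, hp, q, hq, hpq⟩ := Finset.one_lt_card.1 (by omega :
    1 < (T.filter (fun k => ¬ 3 ≤ (I k).card)).card)
  simp only [Finset.mem_filter] at hp hq
  have hpT : p ∈ T := hp.1
  have hqT : q ∈ T := hq.1
  have hIp2 : (I p).card = 2 := by have := hl p; omega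
  have hIq2 : (I q).card = 2 := by have := hl q; omega
  -- the cells of the two bristles
  obtain ⟨cp, hcp⟩ := h.2.2.2.2.2.2.1 p
  obtain ⟨cq, hcq⟩ := h.2.2.2.2.2.2.1 q
  have hcpI : cp ∈ I p := (Finset.mem_inter.1 hcp).1
  have hcpJ : cp ∈ J := (Finset.mem_inter.1 hcp).2
  have hcqI : cq ∈ I q := (Finset.mem_inter.1 hcq).1
  have hcqJ : cq ∈ J := (Finset.mem_inter.1 hcq).2
  obtain ⟨up, hupI, hupne, hupall⟩ := pair_cells hIp2 hcpI
  obtain ⟨uq, huqI, huqne, huqall⟩ := pair_cells hIq2 hcqI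
  have hupJ : up ∉ J := by
    intro hupJ
    exact hupne (Finset.card_le_one.1 (interJ_card_le h p) up
      (Finset.mem_inter.2 ⟨hupI, hupJ⟩) cp hcp)
  have huqJ : uq ∉ J := by
    intro huqJ
    exact huqne (Finset.card_le_one.1 (interJ_card_le h q) uq
      (Finset.mem_inter.2 ⟨huqI, huqJ⟩) cq hcq)
  have hcpcq : cp ≠ cq := by
    intro he
    exact Finset.disjoint_left.1 (h.2.2.2.2.2.1 p q hpq) hcpI (he ▸ hcqI)
  -- toggle function
  set tg : Cell → Finset Cell → Finset Cell :=
    fun x F => if x ∈ F then F.erase x else insert x F with htg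
  -- core toggle lemma
  have core : ∀ (r : Fin d) (x : Cell), r ∈ T → x ∈ I r → x ∉ J → ∀ F, F ∈ D →
      (∀ y ∈ F, y ∈ I r → y = x) →
      tg x F ∈ D ∧ tg x (tg x F) = F ∧
        ((-1 : ℤ) ^ (s - F.card) + (-1 : ℤ) ^ (s - (tg x F).card) = 0) ∧ tg x F ≠ F := by
    intro r x hrT hxI hxJ F hFD hFx
    rw [hD] at hFD
    obtain ⟨hrook, hcard, hsupp⟩ := hFD
    by_cases hxF : x ∈ F
    · -- erase x
      have htgF : tg x F = F.erase x := if_pos hxF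
      have hcard1 : 1 ≤ F.card := Finset.card_pos.2 ⟨x, hxF⟩
      have hcard' : (F.erase x).card = F.card - 1 := Finset.card_erase_of_mem hxF
      refine ⟨?_, ?_, ?_, ?_⟩
      · rw [hD, htgF]
        exact ⟨rook_subset hrook (Finset.erase_subset x F), by omega,
          (supp_mono (Finset.erase_subset x F)).trans hsupp⟩
      · rw [htgF]
        have : tg x (F.erase x) = insert x (F.erase x) := if_neg (Finset.notMem_erase x F)
        rw [this, Finset.insert_erase hxF]
      · rw [htgF, hcard']
        have he : s - (F.card - 1) = (s - F.card) + 1 := by omega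
        rw [he, pow_succ]
        ring
      · rw [htgF]
        intro he
        rw [← he] at hxF
        exact Finset.notMem_erase x F hxF
    · -- insert x
      have htgF : tg x F = insert x F := if_neg hxF
      have hxP : x ∈ P := bristle_subset h r hxI
      have hrs : r ∉ supp I F := by
        intro hr
        simp only [supp, Finset.mem_filter] at hr
        obtain ⟨y, hy⟩ := hr.2
        have := hFx y (Finset.mem_inter.1 hy).1 (Finset.mem_inter.1 hy).2
        exact hxF (this ▸ (Finset.mem_inter.1 hy).1)
      have hsuppcard : (supp I F).card < s := by
        rw [← hTcard]
        exact Finset.card_lt_card ((Finset.ssubset_iff_of_subset hsupp).2 ⟨r, hrT, hrs⟩)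
      have hFcards : F.card < s := by
        rw [rook_card_eq h hrook]
        exact hsuppcard
      have hrook' : IsRookSet P (insert x F) := by
        refine ⟨Finset.insert_subset hxP hrook.1, ?_⟩
        have hx_no : ∀ e ∈ F, ¬ Attacks P x e := by
          intro e heF hatt
          rcases (attacks_iff h).1 hatt with ⟨hne, ⟨hxJ', -⟩ | ⟨m, hxm, hem⟩⟩
          · exact hxJ hxJ'
          · have hmr : m = r := bristle_eq h hxm hxI
            exact hne ((hFx e heF (hmr ▸ hem)).symm)
        intro c hc e he
        rcases Finset.mem_insert.1 hc with rfl | hcF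
        · rcases Finset.mem_insert.1 he with rfl | heF
          · exact fun hatt => hatt.1 rfl
          · exact hx_no e heF
        · rcases Finset.mem_insert.1 he with rfl | heF
          · exact fun hatt => hx_no c hcF (attacks_symm hatt)
          · exact hrook.2 c hcF e heF
      refine ⟨?_, ?_, ?_, ?_⟩
      · rw [hD, htgF]
        refine ⟨hrook', by rw [Finset.card_insert_of_notMem hxF]; omega, ?_⟩
        intro k hk
        simp only [supp, Finset.mem_filter, Finset.mem_univ, true_and] at hk
        obtain ⟨z, hz⟩ := hk
        have hz1 := (Finset.mem_inter.1 hz).1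
        have hz2 := (Finset.mem_inter.1 hz).2
        rcases Finset.mem_insert.1 hz1 with rfl | hzF
        · exact (bristle_eq h hz2 hxI) ▸ hrT
        · exact hsupp (by
            simp only [supp, Finset.mem_filter, Finset.mem_univ, true_and]
            exact ⟨z, Finset.mem_inter.2 ⟨hzF, hz2⟩⟩)
      · rw [htgF]
        have : tg x (insert x F) = (insert x F).erase x :=
          if_pos (Finset.mem_insert_self x F)
        rw [this, Finset.erase_insert hxF]
      · rw [htgF, Finset.card_insert_of_notMem hxF]
        have he : s - F.card = (s - (F.card + 1)) + 1 := by omega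
        rw [he, pow_succ]
        ring
      · rw [htgF]
        intro he
        exact hxF (he ▸ Finset.mem_insert_self x F)
  -- the involution
  have main : ∀ F, F ∈ D →
      (if cp ∈ F then tg uq F else tg up F) ∈ D ∧
      ((-1 : ℤ) ^ (s - F.card) +
        (-1 : ℤ) ^ (s - (if cp ∈ F then tg uq F else tg up F).card) = 0) ∧
      (if cp ∈ F then tg uq F else tg up F) ≠ F ∧
      (cp ∈ (if cp ∈ F then tg uq F else tg up F) ↔ cp ∈ F) ∧
      (if cp ∈ F then tg uq (tg uq F) = F else tg up (tg up F) = F) := by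
    intro F hFD
    by_cases hcpF : cp ∈ F
    · rw [if_pos hcpF]
      have hrook := ((hD F).1 hFD).1
      have hFq : ∀ y ∈ F, y ∈ I q → y = uq := by
        intro y hyF hyq
        rcases huqall y hyq with rfl | rfl
        · exact absurd ((attacks_iff h).2 ⟨hcpcq, Or.inl ⟨hcpJ, hcqJ⟩⟩)
            (hrook.2 cp hcpF y hyF)
        · rfl
      obtain ⟨hmem, hinv, hsum, hne⟩ := core q uq hqT huqI huqJ F hFD hFq
      refine ⟨hmem, hsum, hne, ?_, if_pos hcpF ▸ hinv⟩
      have hcpuq : cp ≠ uq := fun he => huqJ (he ▸ hcpJ)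
      by_cases huqF : uq ∈ F
      · simp [htg, if_pos huqF, Finset.mem_erase, hcpuq, hcpF]
      · simp [htg, if_neg huqF, Finset.mem_insert, hcpuq]
    · rw [if_neg hcpF]
      have hFp : ∀ y ∈ F, y ∈ I p → y = up := by
        intro y hyF hyp
        rcases hupall y hyp with rfl | rfl
        · exact absurd hyF hcpF
        · rfl
      obtain ⟨hmem, hinv, hsum, hne⟩ := core p up hpT hupI hupJ F hFD hFp
      refine ⟨hmem, hsum, hne, ?_, if_neg hcpF ▸ hinv⟩
      have hcpup : cp ≠ up := fun he => hupJ (he ▸ hcpJ)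
      by_cases hupF : up ∈ F
      · simp [htg, if_pos hupF, Finset.mem_erase, hcpup, hcpF]
      · simp [htg, if_neg hupF, Finset.mem_insert, hcpup, hcpF]
  refine Finset.sum_involution (fun F _ => if cp ∈ F then tg uq F else tg up F)
    (fun F hF => (main F hF).2.1)
    (fun F hF _ => (main F hF).2.2.1)
    (fun F hF => (main F hF).1)
    ?_
  intro F hF
  have hmemiff := (main F hF).2.2.2.1
  have hid := (main F hF).2.2.2.2
  by_cases hcpF : cp ∈ F
  · rw [if_pos hcpF] at hmemiff hid
    show (if cp ∈ (if cp ∈ F then tg uq F else tg up F) then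
        tg uq (if cp ∈ F then tg uq F else tg up F)
      else tg up (if cp ∈ F then tg uq F else tg up F)) = F
    rw [if_pos hcpF, if_pos (hmemiff.2 hcpF)]
    exact hid
  · rw [if_neg hcpF] at hmemiff hid
    show (if cp ∈ (if cp ∈ F then tg uq F else tg up F) then
        tg uq (if cp ∈ F then tg uq F else tg up F)
      else tg up (if cp ∈ F then tg uq F else tg up F)) = F
    rw [if_neg hcpF, if_neg (fun hc => hcpF (hmemiff.1 hc))]
    exact hid

end HVec

end Brush
namespace Brush

open Finset

section HVecMain

variable {P J : Finset Cell} {d : ℕ} {I : Fin d → Finset Cell}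

lemma hvec_zero (h : IsPureBrush P J d I) (hl : ∀ k, 2 ≤ (I k).card)
    {t s : ℕ} (ht : t = (Finset.univ.filter (fun k => 3 ≤ (I k).card)).card)
    (hts : t + 1 < s) (hsd : s ≤ d) :
    (∑ i ∈ Finset.range (s + 1),
        (-1 : ℤ) ^ (s - i) * (Nat.choose (d - i) (s - i) : ℤ) *
          ({F : Finset Cell | F.card = i ∧ IsRookSet P F}.ncard : ℤ)) = 0 := by
  classical
  set Rk : ℕ → Finset (Finset Cell) :=
    fun i => P.powerset.filter (fun F => F.card = i ∧ IsRookSet P F) with hRk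
  have hncard : ∀ i : ℕ, ({F : Finset Cell | F.card = i ∧ IsRookSet P F}.ncard : ℤ)
      = ((Rk i).card : ℤ) := by
    intro i
    have hset : {F : Finset Cell | F.card = i ∧ IsRookSet P F} = ↑(Rk i) := by
      ext F
      simp only [Set.mem_setOf_eq, hRk, Finset.coe_filter, Finset.mem_powerset,
        Set.mem_setOf_eq]
      exact ⟨fun hF => ⟨hF.2.1, hF⟩, fun hF => hF.2⟩
    rw [hset, Set.ncard_coe_finset]
  -- rewrite each term as a sum over rook sets
  have step1 : ∀ i ∈ Finset.range (s + 1),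
      (-1 : ℤ) ^ (s - i) * (Nat.choose (d - i) (s - i) : ℤ) *
        ({F : Finset Cell | F.card = i ∧ IsRookSet P F}.ncard : ℤ)
      = ∑ F ∈ Rk i, (-1 : ℤ) ^ (s - F.card) * (Nat.choose (d - F.card) (s - F.card) : ℤ) := by
    intro i _
    rw [hncard i]
    rw [Finset.sum_congr rfl (fun F hF => by
      have : F.card = i := (Finset.mem_filter.1 hF).2.1
      rw [this])]
    rw [Finset.sum_const, nsmul_eq_mul]
    ring
  rw [Finset.sum_congr rfl step1]
  set R : Finset (Finset Cell) := (Finset.range (s + 1)).biUnion Rk with hR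
  have hdisjRk : (↑(Finset.range (s + 1)) : Set ℕ).PairwiseDisjoint Rk := by
    intro i _ j _ hij
    refine Finset.disjoint_left.2 ?_
    intro F hFi hFj
    exact hij (((Finset.mem_filter.1 hFi).2.1).symm.trans ((Finset.mem_filter.1 hFj).2.1))
  rw [← Finset.sum_biUnion hdisjRk]
  have hmemR : ∀ F : Finset Cell, F ∈ R ↔ (IsRookSet P F ∧ F.card ≤ s) := by
    intro F
    simp only [hR, Finset.mem_biUnion, Finset.mem_range, hRk, Finset.mem_filter,
      Finset.mem_powerset]
    constructor
    · rintro ⟨i, hi, -, hcard, hrook⟩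
      exact ⟨hrook, by omega⟩
    · rintro ⟨hrook, hcard⟩
      exact ⟨F.card, by omega, hrook.1, rfl, hrook⟩
  -- expand choose as a count of supersets
  have step2 : ∀ F ∈ R,
      (-1 : ℤ) ^ (s - F.card) * (Nat.choose (d - F.card) (s - F.card) : ℤ)
      = ∑ T ∈ (Finset.univ : Finset (Fin d)).powersetCard s,
          (if supp I F ⊆ T then (-1 : ℤ) ^ (s - F.card) else 0) := by
    intro F hF
    obtain ⟨hrook, hcard⟩ := (hmemR F).1 hF
    have hsc : (supp I F).card = F.card := (rook_card_eq h hrook).symm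
    have hchoose : (Nat.choose (d - F.card) (s - F.card) : ℤ)
        = ∑ T ∈ (Finset.univ : Finset (Fin d)).powersetCard s,
            (if supp I F ⊆ T then (1 : ℤ) else 0) := by
      have := count_supersets (d := d) (s := s) (supp I F) (by omega)
      rw [hsc] at this
      rw [← this, Finset.card_filter]
      push_cast
      rfl
    rw [hchoose, Finset.mul_sum]
    refine Finset.sum_congr rfl fun T _ => ?_
    rw [mul_ite, mul_one, mul_zero]
  rw [Finset.sum_congr rfl step2]
  rw [Finset.sum_comm]
  have step3 : ∀ T ∈ (Finset.univ : Finset (Fin d)).powersetCard s,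
      (∑ F ∈ R, if supp I F ⊆ T then (-1 : ℤ) ^ (s - F.card) else 0) = 0 := by
    intro T hT
    rw [← Finset.sum_filter]
    refine inner_zero h hl ht hts T (Finset.mem_powersetCard.1 hT).2 _ ?_
    intro F
    simp only [Finset.mem_filter, hmemR]
    tauto
  rw [Finset.sum_congr rfl step3, Finset.sum_const, smul_zero]

end HVecMain

end Brush
namespace Brush

open Finset

section Matching

variable {P J : Finset Cell} {d : ℕ} {I : Fin d → Finset Cell}

lemma matching_exists (h : IsPureBrush P J d I) (hl : ∀ k, 2 ≤ (I k).card)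
    {t : ℕ} (ht : t = (Finset.univ.filter (fun k : Fin d => 3 ≤ (I k).card)).card) :
    HasInducedMatching P (min (t + 1) d) := by
  classical
  set K := Finset.univ.filter (fun k : Fin d => 3 ≤ (I k).card) with hK
  set n := min (t + 1) d with hn
  have hKcard : K.card = t := ht.symm
  have htd : t ≤ d := by
    rw [ht]
    calc (Finset.univ.filter (fun k : Fin d => 3 ≤ (I k).card)).card
        ≤ (Finset.univ : Finset (Fin d)).card := Finset.card_filter_le _ _
      _ = d := by simp
  have hnd : n ≤ d := min_le_right _ _
  have hnt : n ≤ t + 1 := min_le_left _ _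
  -- choose cells
  have hsdiffcard : ∀ k : Fin d, (I k).card = (I k \ J).card + (I k ∩ J).card :=
    fun k => (Finset.card_sdiff_add_card_inter (I k) J).symm
  have hexu : ∀ k : Fin d, ∃ c, c ∈ I k \ J := by
    intro k
    have h1 := interJ_card_le h k
    have h2 := hl k
    have h3 := hsdiffcard k
    have : 0 < (I k \ J).card := by omega
    obtain ⟨c, hc⟩ := Finset.card_pos.1 this
    exact ⟨c, hc⟩
  choose u hu using hexu
  have hexv : ∀ k : Fin d, ∃ c, 3 ≤ (I k).card → (c ∈ I k \ J ∧ c ≠ u k) := by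
    intro k
    by_cases h3 : 3 ≤ (I k).card
    · have h1 := interJ_card_le h k
      have h2 := hsdiffcard k
      obtain ⟨c, hc1, hc2⟩ := Finset.exists_mem_ne (s := I k \ J) (by omega) (u k)
      exact ⟨c, fun _ => ⟨hc1, hc2⟩⟩
    · exact ⟨u k, fun hc => absurd hc h3⟩
  choose v hv using hexv
  choose cJ hcJ using h.2.2.2.2.2.2.1
  -- index function
  have hKcompl : Kᶜ.card = d - t := by
    rw [Finset.card_compl, hKcard]
    simp
  set eK := K.orderIsoOfFin hKcard with heK
  set eC := Kᶜ.orderIsoOfFin hKcompl with heC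
  have hf : ∀ i : Fin n, ¬ ((i : ℕ) < t) → (i : ℕ) - t < d - t := by
    intro i hi
    have := i.2
    have : (i : ℕ) < n := i.2
    omega
  set f : Fin n → Fin d := fun i =>
    if hi : (i : ℕ) < t then (eK ⟨(i : ℕ), hi⟩ : Fin d) else (eC ⟨(i : ℕ) - t, hf i hi⟩ : Fin d)
    with hfdef
  have hfK : ∀ i : Fin n, (i : ℕ) < t → f i ∈ K := by
    intro i hi
    simp only [hfdef, dif_pos hi]
    exact (eK ⟨(i : ℕ), hi⟩).2
  have hfK' : ∀ i : Fin n, ¬ ((i : ℕ) < t) → f i ∉ K := by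
    intro i hi
    simp only [hfdef, dif_neg hi]
    have := (eC ⟨(i : ℕ) - t, hf i hi⟩).2
    exact Finset.mem_compl.1 this
  have hfinj : Function.Injective f := by
    intro i j hij
    by_cases hi : (i : ℕ) < t <;> by_cases hj : (j : ℕ) < t
    · simp only [hfdef, dif_pos hi, dif_pos hj] at hij
      have := eK.injective (Subtype.coe_injective hij)
      exact Fin.ext (by simpa using congrArg Fin.val this)
    · exact absurd (hij ▸ hfK i hi) (hfK' j hj)
    · exact absurd (hij.symm ▸ hfK j hj) (hfK' i hi)
    · simp only [hfdef, dif_neg hi, dif_neg hj] at hij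
      have := eC.injective (Subtype.coe_injective hij)
      have h2 : (i : ℕ) - t = (j : ℕ) - t := by simpa using congrArg Fin.val this
      exact Fin.ext (by omega)
  have hfcard : ∀ i : Fin n, (i : ℕ) < t → 3 ≤ (I (f i)).card := by
    intro i hi
    have := hfK i hi
    rw [hK] at this
    exact (Finset.mem_filter.1 this).2
  -- the matching
  set A : Fin n → Cell := fun i => if (i : ℕ) < t then u (f i) else cJ (f i) with hA
  set B : Fin n → Cell := fun i => if (i : ℕ) < t then v (f i) else u (f i) with hB
  have hAI : ∀ i, A i ∈ I (f i) := by
    intro i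
    simp only [hA]
    split_ifs with hi
    · exact (Finset.mem_sdiff.1 (hu (f i))).1
    · exact (Finset.mem_inter.1 (hcJ (f i))).1
  have hBI : ∀ i, B i ∈ I (f i) := by
    intro i
    simp only [hB]
    split_ifs with hi
    · exact (Finset.mem_sdiff.1 ((hv (f i) (hfcard i hi)).1)).1
    · exact (Finset.mem_sdiff.1 (hu (f i))).1
  have hABne : ∀ i, A i ≠ B i := by
    intro i
    simp only [hA, hB]
    split_ifs with hi
    · exact fun he => (hv (f i) (hfcard i hi)).2 he.symm
    · intro he
      exact (Finset.mem_sdiff.1 (hu (f i))).2 (he ▸ (Finset.mem_inter.1 (hcJ (f i))).2)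
  have hBJ : ∀ i, B i ∉ J := by
    intro i
    simp only [hB]
    split_ifs with hi
    · exact (Finset.mem_sdiff.1 ((hv (f i) (hfcard i hi)).1)).2
    · exact (Finset.mem_sdiff.1 (hu (f i))).2
  have hAJ : ∀ i, A i ∈ J → ¬ ((i : ℕ) < t) := by
    intro i hAi hi
    rw [hA] at hAi
    simp only [if_pos hi] at hAi
    exact (Finset.mem_sdiff.1 (hu (f i))).2 hAi
  have hAJuniq : ∀ i j : Fin n, A i ∈ J → A j ∈ J → i = j := by
    intro i j hi hj
    have h1 := hAJ i hi
    have h2 := hAJ j hj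
    have := i.2
    have := j.2
    refine Fin.ext ?_
    have hi2 : (i : ℕ) < n := i.2
    have hj2 : (j : ℕ) < n := j.2
    omega
  refine ⟨A, B, ?_, ?_, ?_, ?_, ?_⟩
  · intro i
    exact (attacks_iff h).2 ⟨hABne i, Or.inr ⟨f i, hAI i, hBI i⟩⟩
  · intro i j hij he
    have hfij : f i ≠ f j := fun hf => hij (hfinj hf)
    exact Finset.disjoint_left.1 (h.2.2.2.2.2.1 _ _ hfij) (hAI i) (he ▸ hAI j)
  · intro i j hij he
    have hfij : f i ≠ f j := fun hf => hij (hfinj hf)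
    exact Finset.disjoint_left.1 (h.2.2.2.2.2.1 _ _ hfij) (hBI i) (he ▸ hBI j)
  · intro i j he
    by_cases hij : i = j
    · exact hABne i (hij ▸ he)
    · have hfij : f i ≠ f j := fun hf => hij (hfinj hf)
      exact Finset.disjoint_left.1 (h.2.2.2.2.2.1 _ _ hfij) (hAI i) (he ▸ hBI j)
  · intro i j hij
    have hfij : f i ≠ f j := fun hf => hij (hfinj hf)
    refine ⟨?_, ?_, ?_⟩
    · intro hatt
      rcases (attacks_iff h).1 hatt with ⟨hne, ⟨h1, h2⟩ | ⟨m, h1, h2⟩⟩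
      · exact hij (hAJuniq i j h1 h2)
      · exact hfij ((bristle_eq h h1 (hAI i)).symm.trans (bristle_eq h h2 (hAI j)))
    · intro hatt
      rcases (attacks_iff h).1 hatt with ⟨hne, ⟨h1, h2⟩ | ⟨m, h1, h2⟩⟩
      · exact hBJ j h2
      · exact hfij ((bristle_eq h h1 (hAI i)).symm.trans (bristle_eq h h2 (hBI j)))
    · intro hatt
      rcases (attacks_iff h).1 hatt with ⟨hne, ⟨h1, h2⟩ | ⟨m, h1, h2⟩⟩
      · exact hBJ i h1
      · exact hfij ((bristle_eq h h1 (hBI i)).symm.trans (bristle_eq h h2 (hBI j)))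

end Matching

end Brush
namespace Brush

open Finset

section Upper

variable {P J : Finset Cell} {d : ℕ} {I : Fin d → Finset Cell}

lemma matching_le (h : IsPureBrush P J d I) (hl : ∀ k, 2 ≤ (I k).card)
    {t : ℕ} (ht : t = (Finset.univ.filter (fun k : Fin d => 3 ≤ (I k).card)).card)
    {m : ℕ} (hm : HasInducedMatching P m) : m ≤ min (t + 1) d := by
  classical
  obtain ⟨A, B, hatt, hAinj, hBinj, hABne, hind⟩ := hm
  have hJP : J ⊆ P := by
    rcases h.2.2.2.2.1 with ⟨hJ, -⟩ | ⟨hJ, -⟩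
    · exact hJ.2.1
    · exact hJ.2.1
  have hAP : ∀ i, A i ∈ P := by
    intro i
    rcases (attacks_iff h).1 (hatt i) with ⟨-, ⟨h1, -⟩ | ⟨k, h1, -⟩⟩
    · exact hJP h1
    · exact bristle_subset h k h1
  choose g hg using fun i => mem_bristle h (hAP i)
  have hginj : Function.Injective g := by
    intro i j hgij
    by_contra hij
    exact (hind i j hij).1 ((attacks_iff h).2
      ⟨hAinj i j hij, Or.inr ⟨g i, hg i, hgij ▸ hg j⟩⟩)
  have hmd : m ≤ d := by
    have := Fintype.card_le_of_injective g hginj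
    simpa using this
  set Tch := Finset.univ.filter (fun i : Fin m => A i ∈ J ∨ B i ∈ J) with hTch
  have hTch1 : Tch.card ≤ 1 := by
    refine Finset.card_le_one.2 ?_
    intro i hi j hj
    by_contra hij
    simp only [hTch, Finset.mem_filter] at hi hj
    rcases hi.2 with hiA | hiB <;> rcases hj.2 with hjA | hjB
    · exact (hind i j hij).1 ((attacks_iff h).2 ⟨hAinj i j hij, Or.inl ⟨hiA, hjA⟩⟩)
    · exact (hind i j hij).2.1 ((attacks_iff h).2 ⟨hABne i j, Or.inl ⟨hiA, hjB⟩⟩)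
    · exact (hind j i (fun he => hij he.symm)).2.1
        ((attacks_iff h).2 ⟨hABne j i, Or.inl ⟨hjA, hiB⟩⟩)
    · exact (hind i j hij).2.2 ((attacks_iff h).2 ⟨hBinj i j hij, Or.inl ⟨hiB, hjB⟩⟩)
  have hnt : ∀ i ∈ Tchᶜ, g i ∈ Finset.univ.filter (fun k : Fin d => 3 ≤ (I k).card) := by
    intro i hi
    rw [Finset.mem_compl, hTch, Finset.mem_filter] at hi
    push_neg at hi
    obtain ⟨hiA, hiB⟩ := hi (Finset.mem_univ i)
    rcases (attacks_iff h).1 (hatt i) with ⟨hne, ⟨h1, -⟩ | ⟨k, h1, h2⟩⟩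
    · exact absurd h1 hiA
    · have hk : k = g i := bristle_eq h h1 (hg i)
      have hBi : B i ∈ I (g i) := hk ▸ h2
      obtain ⟨cj, hcj⟩ := h.2.2.2.2.2.2.1 (g i)
      have hcjI := (Finset.mem_inter.1 hcj).1
      have hcjJ := (Finset.mem_inter.1 hcj).2
      have hsub : ({A i, B i, cj} : Finset Cell) ⊆ I (g i) := by
        intro x hx
        simp only [Finset.mem_insert, Finset.mem_singleton] at hx
        rcases hx with rfl | rfl | rfl
        · exact hg i
        · exact hBi
        · exact hcjI
      have hABi : A i ≠ B i := hABne i i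
      have hAcj : A i ≠ cj := fun he => hiA (he ▸ hcjJ)
      have hBcj : B i ≠ cj := fun he => hiB (he ▸ hcjJ)
      have hc3 : ({A i, B i, cj} : Finset Cell).card = 3 := by
        rw [Finset.card_insert_of_notMem (by simp [hABi, hAcj]),
          Finset.card_insert_of_notMem (by simp [hBcj]), Finset.card_singleton]
      refine Finset.mem_filter.2 ⟨Finset.mem_univ _, ?_⟩
      calc 3 = ({A i, B i, cj} : Finset Cell).card := hc3.symm
        _ ≤ (I (g i)).card := Finset.card_le_card hsub
  have hcnt : Tchᶜ.card ≤ t := by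
    rw [ht]
    exact Finset.card_le_card_of_injOn g hnt (fun i _ j _ he => hginj he)
  have hsum : Tch.card + Tchᶜ.card = m := by
    rw [Finset.card_add_card_compl]
    simp
  exact le_min (by omega) hmd

lemma matchNum_eq (h : IsPureBrush P J d I) (hl : ∀ k, 2 ≤ (I k).card)
    {t : ℕ} (ht : t = (Finset.univ.filter (fun k : Fin d => 3 ≤ (I k).card)).card) :
    matchNum P = min (t + 1) d := by
  have hmem : min (t + 1) d ∈ {n | HasInducedMatching P n} := matching_exists h hl ht
  have hbd : ∀ m ∈ {n | HasInducedMatching P n}, m ≤ min (t + 1) d :=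
    fun m hm => matching_le h hl ht hm
  refine le_antisymm ?_ ?_
  · exact csSup_le ⟨_, hmem⟩ hbd
  · exact le_csSup ⟨min (t + 1) d, fun m hm => hbd m hm⟩ hmem

end Upper

end Brush


/-- For a pure brush polyomino with all bristles of length at least 2, the
induced matching number equals `min (t+1) d` where `t` is the number of bristles
of length at least 3; moreover `h_s = 0` for `min (t+1) d < s ≤ d`. -/
theorem statement18 (P J : Finset Cell) (d : ℕ) (I : Fin d → Finset Cell)
    (h : IsPureBrush P J d I) (hl : ∀ k, 2 ≤ (I k).card)
    (t : ℕ) (ht : t = (Finset.univ.filter (fun k => 3 ≤ (I k).card)).card) :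
    matchNum P = min (t + 1) d ∧
    ∀ s : ℕ, min (t + 1) d < s → s ≤ d →
      (∑ i ∈ Finset.range (s + 1),
          (-1 : ℤ) ^ (s - i) * (Nat.choose (d - i) (s - i) : ℤ) *
            ({F : Finset Cell | F.card = i ∧ IsRookSet P F}.ncard : ℤ)) = 0 := by
  constructor
  · exact Brush.matchNum_eq h hl ht
  · intro s hs1 hs2
    have hts : t + 1 < s := by omega
    exact Brush.hvec_zero h hl ht hts hs2
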